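/- Let N be even and let C_N be the N×N adjacency matrix of the modular Collatz graph mod N (entry c_{i,j} counts n ∈ {0,…,2N−1} with n ≡ i mod N and T(n) ≡ j mod N, where T(n) = n/2 for even n and T(n) = (3n+1)/2 for odd n). Then c_{i,j} = c_{i, j+N/2 mod N} for all i,j; consequently det C_N = 0 and rank C_N = N/2. -/

import Mathlib

/-- The Collatz function. -/
def collatzT (n : ℕ) : ℕ := if n % 2 = 0 then n / 2 else (3 * n + 1) / 2

/-- Adjacency matrix of the modular Collatz graph mod `N` (entries in ℚ):
`c i j` counts `n ∈ {0,…,2N−1}` with `n ≡ i` and `T n ≡ j (mod N)`. -/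
def collatzMatQ (N : ℕ) : Matrix (Fin N) (Fin N) ℚ :=
  fun i j =>
    (((Finset.range (2 * N)).filter
      (fun n => n % N = i.val ∧ collatzT n % N = j.val)).card : ℚ)

lemma mod_half (h a : ℕ) (_hh : 0 < h) (ha : a < 2 * h) :
    a % h = if a < h then a else a - h := by
  split_ifs with hc
  · exact Nat.mod_eq_of_lt hc
  · rw [Nat.mod_eq_sub_mod (by omega), Nat.mod_eq_of_lt (by omega)]

lemma add_half_mod (h a : ℕ) (hh : 0 < h) (ha : a < 2 * h) :
    (a + h) % (2 * h) = if a < h then a + h else a - h := by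
  split_ifs with hc
  · exact Nat.mod_eq_of_lt (by omega)
  · have e : a + h - 2 * h = a - h := by omega
    rw [Nat.mod_eq_sub_mod (by omega), e, Nat.mod_eq_of_lt (by omega)]

lemma collatz_shift (h : ℕ) (i : ℕ) :
    collatzT (i + 2 * h) % (2 * h) = (collatzT i + h) % (2 * h) := by
  unfold collatzT
  rcases Nat.even_or_odd i with ⟨k, hk⟩ | ⟨k, hk⟩
  · subst hk
    have h1 : (k + k) % 2 = 0 := by omega
    have h2 : (k + k + 2 * h) % 2 = 0 := by omega
    simp only [h1, h2, if_true]
    have : (k + k + 2 * h) / 2 = (k + k) / 2 + h := by omega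
    rw [this]
  · subst hk
    have h1 : (2 * k + 1) % 2 = 1 := by omega
    have h2 : (2 * k + 1 + 2 * h) % 2 = 1 := by omega
    simp only [h1, h2, if_neg (by omega : ¬(1:ℕ) = 0)]
    have e1 : (3 * (2 * k + 1 + 2 * h) + 1) / 2
        = ((3 * (2 * k + 1) + 1) / 2 + h) + 2 * h := by omega
    rw [e1, Nat.add_mod_right]

lemma collatzMatQ_eq (h : ℕ) (hh : 0 < h) (i j : Fin (2 * h)) :
    collatzMatQ (2 * h) i j =
      if j.val % h = collatzT i.val % h then 1 else 0 := by
  unfold collatzMatQ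
  have hset : ((Finset.range (2 * (2 * h))).filter
      (fun n => n % (2 * h) = i.val ∧ collatzT n % (2 * h) = j.val))
      = ({(i.val : ℕ), i.val + 2 * h} : Finset ℕ).filter
        (fun n => collatzT n % (2 * h) = j.val) := by
    ext n
    simp only [Finset.mem_filter, Finset.mem_range, Finset.mem_insert, Finset.mem_singleton]
    constructor
    · rintro ⟨hn, hmod, hT⟩
      refine ⟨?_, hT⟩
      have hd := Nat.div_add_mod n (2 * h)
      have hq : n / (2 * h) < 2 := Nat.div_lt_of_lt_mul (by omega)
      interval_cases hnq : n / (2 * h) <;> omega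
    · rintro ⟨hn, hT⟩
      have hi := i.isLt
      rcases hn with rfl | rfl
      · exact ⟨by omega, Nat.mod_eq_of_lt hi, hT⟩
      · exact ⟨by omega, by rw [Nat.add_mod_right, Nat.mod_eq_of_lt hi], hT⟩
  rw [hset, Finset.filter_insert, Finset.filter_singleton]
  set c := collatzT i.val with hc
  set a := c % (2 * h) with ha
  have halt : a < 2 * h := Nat.mod_lt _ (by omega)
  have hjlt : j.val < 2 * h := j.isLt
  have hshift : collatzT (i.val + 2 * h) % (2 * h) = (a + h) % (2 * h) := by
    rw [collatz_shift, Nat.add_mod, Nat.mod_eq_of_lt (show h < 2 * h by omega), ← ha]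
  have hch : c % h = a % h := (Nat.mod_mod_of_dvd c ⟨2, by ring⟩).symm
  have hne : (i.val : ℕ) ∉ ({i.val + 2 * h} : Finset ℕ) := by simp; omega
  have h1 := mod_half h a hh halt
  have h2 := mod_half h j.val hh hjlt
  have h3 := add_half_mod h a hh halt
  rw [hshift, hch, h1, h2, h3]
  split_ifs <;>
    first
      | (exfalso; omega)
      | simp [Finset.card_insert_of_notMem hne]

theorem collatzMat_even_modulus (N : ℕ) (hN : 0 < N) (hev : Even N) :
    (∀ i j : Fin N, collatzMatQ N i j =
      collatzMatQ N i ⟨(j.val + N / 2) % N, Nat.mod_lt _ hN⟩) ∧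
    (collatzMatQ N).det = 0 ∧ (collatzMatQ N).rank = N / 2 := by
  obtain ⟨h, hNh⟩ := hev
  have hNe : N = 2 * h := by omega
  have hh : 0 < h := by omega
  have hhalf : N / 2 = h := by omega
  subst hNe
  have key : ∀ i j : Fin (2 * h), collatzMatQ (2 * h) i j =
      if j.val % h = collatzT i.val % h then 1 else 0 := collatzMatQ_eq h hh
  refine ⟨?_, ?_, ?_⟩
  · intro i j
    rw [key, key]
    simp only [hhalf]
    congr 1
    rw [eq_iff_iff]
    have : (j.val + h) % (2 * h) % h = j.val % h := by
      rw [Nat.mod_mod_of_dvd _ ⟨2, by ring⟩, Nat.add_mod_right]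
    rw [this]
  · apply Matrix.det_zero_of_column_eq (i := ⟨0, by omega⟩) (j := ⟨h, by omega⟩)
    · intro hcon
      exact absurd (congrArg Fin.val hcon) (by simp; omega)
    · intro i
      rw [key, key]
      simp [Nat.mod_self, Nat.zero_mod]
      rfl
  · rw [hhalf]
    -- factorization for upper bound
    set E : Matrix (Fin (2 * h)) (Fin h) ℚ :=
      fun i k => if k.val = collatzT i.val % h then 1 else 0 with hE
    set F : Matrix (Fin h) (Fin (2 * h)) ℚ :=
      fun k j => if j.val % h = k.val then 1 else 0 with hF
    have hEF : collatzMatQ (2 * h) = E * F := by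
      ext i j
      rw [key, Matrix.mul_apply]
      rw [Finset.sum_eq_single ⟨collatzT i.val % h, Nat.mod_lt _ hh⟩]
      · simp [hE, hF]
      · intro k _ hk
        have : k.val ≠ collatzT i.val % h := fun hc =>
          hk (Fin.ext hc)
        simp [hE, hF, this]
      · simp
    have hub : (collatzMatQ (2 * h)).rank ≤ h := by
      rw [hEF]
      calc (E * F).rank ≤ F.rank := Matrix.rank_mul_le_right E F
        _ ≤ Fintype.card (Fin h) := Matrix.rank_le_card_height F
        _ = h := Fintype.card_fin h
    -- lower bound via U * A * V = 1
    set U : Matrix (Fin h) (Fin (2 * h)) ℚ :=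
      fun k i => if i.val = 2 * k.val then 1 else 0 with hU
    set V : Matrix (Fin (2 * h)) (Fin h) ℚ :=
      fun j m => if j.val = m.val then 1 else 0 with hV
    have hUAV : U * (collatzMatQ (2 * h) * V) = 1 := by
      ext k m
      rw [Matrix.mul_apply]
      rw [Finset.sum_eq_single ⟨2 * k.val, by omega⟩]
      · have hval : collatzT (2 * k.val) % h = k.val := by
          unfold collatzT
          have : (2 * k.val) % 2 = 0 := by omega
          rw [if_pos this]
          have : 2 * k.val / 2 = k.val := by omega
          rw [this, Nat.mod_eq_of_lt k.isLt]
        have hBV : (collatzMatQ (2 * h) * V) ⟨2 * k.val, by omega⟩ m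
            = collatzMatQ (2 * h) ⟨2 * k.val, by omega⟩ ⟨m.val, by omega⟩ := by
          rw [Matrix.mul_apply]
          rw [Finset.sum_eq_single ⟨m.val, by omega⟩]
          · simp [hV]
          · intro j _ hj
            have : j.val ≠ m.val := fun hc => hj (Fin.ext hc)
            simp [hV, this]
          · simp
        rw [hBV, key]
        simp only [hU, if_pos rfl, one_mul]
        rw [hval, Nat.mod_eq_of_lt m.isLt]
        rw [Matrix.one_apply]
        by_cases hkm : k = m
        · simp [hkm]
        · have h5 : m.val ≠ k.val := fun hc => hkm (Fin.ext hc).symm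
          simp [hkm, h5]
      · intro i _ hi
        have : i.val ≠ 2 * k.val := fun hc => hi (Fin.ext hc)
        simp [hU, this]
      · simp
    have hlb : h ≤ (collatzMatQ (2 * h)).rank := by
      calc h = Fintype.card (Fin h) := (Fintype.card_fin h).symm
        _ = (1 : Matrix (Fin h) (Fin h) ℚ).rank := Matrix.rank_one.symm
        _ = (U * (collatzMatQ (2 * h) * V)).rank := by rw [hUAV]
        _ ≤ (collatzMatQ (2 * h) * V).rank := Matrix.rank_mul_le_right _ _
        _ ≤ (collatzMatQ (2 * h)).rank := Matrix.rank_mul_le_left _ _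
    omega
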